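/- With the optimal density f_λ from the Euler–Lagrange condition substituted, the minimum miss probability equals P_f^{opt} = (1 - 2 r_s)^n / (∫₀¹ f_X(x)^{-1/(n-1)} dx)^{n-1}, assuming f_X > 0 on [0,1] and the stated f_λ is a valid density. -/

import Mathlib

open MeasureTheory

/-- Minimum miss probability with the optimal sensor density: if
`f_λ(x) = (1 - (μ / (2 n r_s f_X(x)))^{1/(n-1)}) / (2 r_s)` is a valid density
(`0 ≤ f_λ ≤ 1/(2 r_s)` and `∫₀¹ f_λ = 1`) for a transmitter density `f_X > 0`
on `[0,1]`, then
`∫₀¹ (1 - 2 r_s f_λ(x))ⁿ f_X(x) dx = (1 - 2 r_s)ⁿ / (∫₀¹ f_X(x)^{-1/(n-1)} dx)^{n-1}`. -/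
theorem optimal_miss_probability_closed_form
    (fX : ℝ → ℝ) (hfXmeas : Measurable fX)
    (hfXpos : ∀ x ∈ Set.Icc (0:ℝ) 1, 0 < fX x)
    (hfXint : ∫ x in Set.Icc (0:ℝ) 1, fX x = 1)
    (rs : ℝ) (hrs : 0 < rs) (hrs1 : 2 * rs < 1) (n : ℕ) (hn : 2 ≤ n)
    (μ : ℝ) (hμ : 0 < μ)
    (g : ℝ → ℝ)
    (hg : ∀ x ∈ Set.Icc (0:ℝ) 1,
      g x = (1 - (μ / (2 * n * rs * fX x)) ^ ((1:ℝ) / (n - 1))) / (2 * rs))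
    (hgnonneg : ∀ x ∈ Set.Icc (0:ℝ) 1, 0 ≤ g x)
    (hgcap : ∀ x ∈ Set.Icc (0:ℝ) 1, 2 * rs * g x ≤ 1)
    (hgint : ∫ x in Set.Icc (0:ℝ) 1, g x = 1)
    (hint : IntegrableOn (fun x => (fX x) ^ (-(1:ℝ) / (n - 1))) (Set.Icc (0:ℝ) 1)) :
    ∫ x in Set.Icc (0:ℝ) 1, (1 - 2 * rs * g x) ^ n * fX x
      = (1 - 2 * rs) ^ n
        / (∫ x in Set.Icc (0:ℝ) 1, (fX x) ^ (-(1:ℝ) / (n - 1))) ^ (n - 1) := by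
  have hn2 : (2:ℝ) ≤ (n:ℝ) := by exact_mod_cast hn
  have hn0 : (n:ℝ) - 1 ≠ 0 := by linarith
  have hrsne : (2:ℝ) * rs ≠ 0 := by positivity
  have hnposR : (0:ℝ) < (n:ℝ) := by linarith
  set c : ℝ := μ / (2 * n * rs) with hc
  have hcpos : 0 < c := by
    apply div_pos hμ; positivity
  set t : ℝ := c ^ ((1:ℝ) / ((n:ℝ) - 1)) with ht
  have htpos : 0 < t := Real.rpow_pos_of_pos hcpos _
  set J : ℝ → ℝ := fun x => fX x ^ (-(1:ℝ) / ((n:ℝ) - 1)) with hJ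
  set I : ℝ := ∫ x in Set.Icc (0:ℝ) 1, J x with hI
  -- pointwise rewriting of the rpow term
  have hA : ∀ x ∈ Set.Icc (0:ℝ) 1,
      (μ / (2 * n * rs * fX x)) ^ ((1:ℝ) / ((n:ℝ) - 1)) = t * J x := by
    intro x hx
    have hfx : 0 < fX x := hfXpos x hx
    have h1 : μ / (2 * n * rs * fX x) = c * (fX x)⁻¹ := by
      rw [← div_eq_mul_inv, hc, div_div]
    rw [h1, Real.mul_rpow hcpos.le (by positivity), ht, hJ]
    congr 1
    rw [Real.inv_rpow hfx.le, ← Real.rpow_neg hfx.le, neg_div]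
  -- rewriting g
  have hgeq : ∀ x ∈ Set.Icc (0:ℝ) 1, g x = (1 - t * J x) / (2 * rs) := by
    intro x hx
    rw [hg x hx, hA x hx]
  -- integrability
  have hJint : IntegrableOn J (Set.Icc (0:ℝ) 1) := hint
  have htJint : IntegrableOn (fun x => t * J x) (Set.Icc (0:ℝ) 1) := hJint.const_mul t
  -- constraint : t * I = 1 - 2 rs
  have hconstr : t * I = 1 - 2 * rs := by
    have h2 : ∫ x in Set.Icc (0:ℝ) 1, g x
        = ∫ x in Set.Icc (0:ℝ) 1, (1 - t * J x) / (2 * rs) :=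
      setIntegral_congr_fun measurableSet_Icc (fun x hx => hgeq x hx)
    rw [hgint] at h2
    have h3 : ∫ x in Set.Icc (0:ℝ) 1, (1 - t * J x) / (2 * rs)
        = ((∫ x in Set.Icc (0:ℝ) 1, (1:ℝ)) - ∫ x in Set.Icc (0:ℝ) 1, t * J x) / (2 * rs) := by
      rw [integral_div, integral_sub (by
        refine integrableOn_const (hs := ?_)
        simp [Real.volume_Icc]) htJint]
    have h4 : (∫ x in Set.Icc (0:ℝ) 1, (1:ℝ)) = 1 := by
      simp [Real.volume_Icc]
    rw [h3, h4, integral_const_mul] at h2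
    rw [hI]
    field_simp at h2
    linarith
  have hIpos : 0 < I := by
    by_contra h
    push_neg at h
    nlinarith
  -- pointwise rewriting of the integrand
  have hB : ∀ x ∈ Set.Icc (0:ℝ) 1,
      (1 - 2 * rs * g x) ^ n * fX x = t ^ n * J x := by
    intro x hx
    have hfx : 0 < fX x := hfXpos x hx
    have h2 : 1 - 2 * rs * g x = t * J x := by
      rw [hgeq x hx, mul_div_cancel₀ _ hrsne]
      ring
    rw [h2, mul_pow, mul_assoc]
    congr 1
    have hJn : J x ^ n = fX x ^ ((-(1:ℝ) / ((n:ℝ) - 1)) * n) := by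
      rw [hJ, ← Real.rpow_natCast (fX x ^ (-(1:ℝ) / ((n:ℝ) - 1))) n,
        ← Real.rpow_mul hfx.le]
    have hexp : (-(1:ℝ) / ((n:ℝ) - 1)) * n + 1 = -(1:ℝ) / ((n:ℝ) - 1) := by
      field_simp
      ring
    rw [hJn, hJ]
    calc fX x ^ ((-(1:ℝ) / ((n:ℝ) - 1)) * n) * fX x
        = fX x ^ ((-(1:ℝ) / ((n:ℝ) - 1)) * n) * fX x ^ (1:ℝ) := by
          rw [Real.rpow_one]
      _ = fX x ^ ((-(1:ℝ) / ((n:ℝ) - 1)) * n + 1) := (Real.rpow_add hfx _ _).symm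
      _ = fX x ^ (-(1:ℝ) / ((n:ℝ) - 1)) := by rw [hexp]
  -- compute the integral
  have hLHS : ∫ x in Set.Icc (0:ℝ) 1, (1 - 2 * rs * g x) ^ n * fX x = t ^ n * I := by
    rw [setIntegral_congr_fun measurableSet_Icc (fun x hx => hB x hx),
      integral_const_mul, hI]
  rw [hLHS, ← hconstr, mul_pow]
  have hpow : I ^ n = I ^ (n - 1) * I := by
    conv_lhs => rw [show n = (n - 1) + 1 from by omega]
    rw [pow_succ]
  rw [hpow]
  have hIne : I ^ (n - 1) ≠ 0 := by positivity
  field_simp
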